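/- For every integer d ≥ 2 there exists a constant C > 0, depending only on d, such that for every integer N ≥ 3 and every eigenvalue μ of the discrete torus T^d_N with μ > 2(d−2) or μ < −2(d−2), the multiplicity satisfies m_{T^d_N}(μ) ≤ C. -/

import Mathlib

/-- The multiplicity of `μ` as an eigenvalue of the discrete torus `T^d_N`:
the number of tuples `(k_1, …, k_d) ∈ {0, …, N-1}^d` with
`∑_j 2 cos(2π k_j / N) = μ`. -/
noncomputable def torusMult (N d : ℕ) (μ : ℝ) : ℕ :=
  Nat.card {k : Fin d → Fin N //
    (∑ j, 2 * Real.cos (2 * Real.pi * (k j : ℝ) / N)) = μ}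

open Polynomial Finset Complex

noncomputable section
namespace TorusAux

lemma mann_core {ι : Type*} [DecidableEq ι] (T : Finset ι) (f g : ι → ℂ) (i₀ : ι) (hi₀ : i₀ ∈ T)
    (hf0 : ∀ j ∈ T, f j ≠ 0)
    (hgdef : ∀ j ∈ T, g j = f j / f i₀)
    (hsum : ∑ i ∈ T, f i = 0)
    (hmin : ∀ T' ⊆ T, T'.Nonempty → T' ≠ T → ∑ i ∈ T', f i ≠ 0)
    (m : ℕ) (hm1 : 0 < m) (hm2 : ∀ j ∈ T, g j ^ m = 1)
    (hleast : ∀ m'' : ℕ, 0 < m'' → (∀ j ∈ T, g j ^ m'' = 1) → m ≤ m'')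
    (p : ℕ) (hp : p.Prime) (hpm : p ∣ m)
    (hcase : 2 ≤ m.factorization p ∨ T.card < p) : False := by
  classical
  set a := m.factorization p with hadef
  have ha1 : 1 ≤ a := hp.factorization_pos_of_dvd hm1.ne' hpm
  set m' := m / p ^ a with hm'def
  have hma : p ^ a * m' = m := Nat.ordProj_mul_ordCompl_eq_self m p
  have hpm' : ¬ p ∣ m' := Nat.not_dvd_ordCompl hp hm1.ne'
  have hcop : Nat.Coprime m' (p ^ a) := ((hp.coprime_iff_not_dvd).2 hpm').symm.pow_right a
  have hpa1 : 1 < p ^ a := Nat.one_lt_pow (by omega) hp.one_lt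
  obtain ⟨r, hr⟩ : ∃ r, m' * r % p ^ a = 1 := by
    obtain ⟨r, -, hr⟩ := Nat.exists_mul_mod_eq_one_of_coprime hcop hpa1; exact ⟨r, hr⟩
  have hpr : ¬ p ∣ r := by
    intro h
    have h1 : p ∣ m' * r := Dvd.dvd.mul_left h m'
    have h2 : p ∣ p ^ a := dvd_pow_self p (by omega)
    have h3 : p ∣ m' * r % p ^ a := (Nat.dvd_mod_iff h2).2 h1
    rw [hr] at h3
    exact hp.one_lt.ne' (Nat.dvd_one.1 h3)
  -- m/p facts
  have hmp : m / p * p = m := Nat.div_mul_cancel hpm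
  have hmp0 : 0 < m / p := Nat.div_pos (Nat.le_of_dvd hm1 hpm) hp.pos
  have hpow : p ^ a = p ^ (a - 1) * p := by
    conv_lhs => rw [← Nat.sub_add_cancel ha1]
    rw [pow_succ]
  have hmpc : m / p = p ^ (a - 1) * m' := by
    have : m = (p ^ (a - 1) * m') * p := by rw [← hma, hpow]; ring
    rw [this, Nat.mul_div_cancel _ hp.pos]
  -- the primitive root
  haveI : NeZero m := ⟨hm1.ne'⟩
  set ζ : ℂ := Complex.exp (2 * Real.pi * Complex.I / m) with hζdef
  have hζ : IsPrimitiveRoot ζ m := Complex.isPrimitiveRoot_exp m hm1.ne'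
  set t : ι → ℕ := fun j => if h : j ∈ T then (hζ.eq_pow_of_pow_eq_one (hm2 j h)).choose else 0
    with htdef
  have ht : ∀ j ∈ T, ζ ^ t j = g j := by
    intro j hj
    simp only [htdef, dif_pos hj]
    exact (hζ.eq_pow_of_pow_eq_one (hm2 j hj)).choose_spec.2
  have hsumg : ∑ j ∈ T, g j = 0 := by
    rw [Finset.sum_congr rfl hgdef, ← Finset.sum_div, hsum, zero_div]
  -- Galois-conjugate relations
  have hrel : ∀ u : ℕ, Nat.Coprime u m → ∑ j ∈ T, ζ ^ (u * t j) = 0 := by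
    intro u hu
    set R : Polynomial ℚ := ∑ j ∈ T, X ^ t j with hRdef
    have hR : (aeval ζ) R = 0 := by
      rw [hRdef, map_sum]
      simp only [map_pow, aeval_X]
      rw [Finset.sum_congr rfl ht]
      exact hsumg
    obtain ⟨Q, hQ⟩ := minpoly.dvd ℚ ζ hR
    have hζu : IsPrimitiveRoot (ζ ^ u) m := hζ.pow_of_coprime u hu
    have hcyc : (aeval (ζ ^ u)) (minpoly ℚ ζ) = 0 := by
      rw [← cyclotomic_eq_minpoly_rat hζ hm1, Polynomial.aeval_def, ← Polynomial.eval_map,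
        map_cyclotomic]
      exact hζu.isRoot_cyclotomic hm1
    have hzero : (aeval (ζ ^ u)) R = 0 := by rw [hQ, map_mul, hcyc, zero_mul]
    rw [hRdef, map_sum] at hzero
    simp only [map_pow, aeval_X] at hzero
    calc ∑ j ∈ T, ζ ^ (u * t j) = ∑ j ∈ T, (ζ ^ u) ^ t j := by
          exact Finset.sum_congr rfl fun j hj => by rw [← pow_mul]
      _ = 0 := hzero
  -- the auxiliary p-th root of unity w
  set c : ℕ := m / p * r with hcdef
  set w : ℂ := ζ ^ c with hwdef
  set v : ι → ℂ := fun j => w ^ t j with hvdef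
  have hcp : c * p = m * r := by rw [hcdef, mul_comm (m / p) r, mul_assoc, hmp, mul_comm]
  have hwp : w ^ p = 1 := by
    rw [hwdef, ← pow_mul, hcp, pow_mul, hζ.pow_eq_one, one_pow]
  have hw1 : ∀ s : ℕ, w ^ s = 1 ↔ p ∣ s := by
    intro s
    rw [hwdef, ← pow_mul, hζ.pow_eq_one_iff_dvd]
    constructor
    · intro h
      have h2 : m / p * p ∣ m / p * (r * s) := by
        rw [hmp]
        calc m ∣ c * s := h
          _ = m / p * (r * s) := by rw [hcdef]; ring
      have h3 : p ∣ r * s := (Nat.mul_dvd_mul_iff_left hmp0).1 h2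
      exact ((hp.coprime_iff_not_dvd).2 hpr).dvd_of_dvd_mul_left h3
    · rintro ⟨s', rfl⟩
      exact ⟨r * s', by rw [← mul_assoc, hcp, mul_assoc]⟩
  have hvp : ∀ j : ι, v j ^ p = 1 := by
    intro j
    rw [hvdef]
    show (w ^ t j) ^ p = 1
    rw [← pow_mul, mul_comm, pow_mul, hwp, one_pow]
  have hv0 : ∀ j : ι, v j ≠ 0 := by
    intro j h
    have := hvp j
    rw [h, zero_pow hp.pos.ne'] at this
    exact zero_ne_one this
  -- coprimality of the shifts
  have hqc : ∀ q : ℕ, q.Prime → q ∣ m → q ≠ p → q ∣ c := by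
    intro q hq hqm hqp
    have hq0 : Nat.Coprime q p := (hq.coprime_iff_not_dvd).2
      (fun hd => hqp ((Nat.prime_dvd_prime_iff_eq hq hp).1 hd))
    have hq1 : Nat.Coprime q (p ^ a) := hq0.pow_right a
    have hq2 : q ∣ m' * p ^ a := by rw [mul_comm, hma]; exact hqm
    have hq3 : q ∣ m' := hq1.dvd_of_dvd_mul_right hq2
    have hq4 : m' ∣ m / p := by rw [hmpc]; exact dvd_mul_left m' (p ^ (a - 1))
    exact (hq3.trans hq4).trans (dvd_mul_right (m / p) r)
  have hcopgen : ∀ k : ℕ, ¬ p ∣ 1 + k * c → Nat.Coprime (1 + k * c) m := by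
    intro k hk
    by_contra hne
    obtain ⟨q, hq, hqd⟩ := Nat.exists_prime_and_dvd (fun h1 => by
      rw [Nat.coprime_iff_gcd_eq_one] at hne; exact hne h1)
    have hq1 : q ∣ 1 + k * c := hqd.trans (Nat.gcd_dvd_left _ _)
    have hq2 : q ∣ m := hqd.trans (Nat.gcd_dvd_right _ _)
    have hqc' : q ∣ c := by
      rcases eq_or_ne q p with rfl | hqp
      · exact absurd hq1 hk
      · exact hqc q hq hq2 hqp
    have : q ∣ 1 := by
      have : q ∣ k * c := Dvd.dvd.mul_left hqc' k
      have h3 := Nat.dvd_sub hq1 this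
      simpa using h3
    exact hq.one_lt.ne' (Nat.dvd_one.1 this)
  -- main relations
  have hArel : ∀ k : ℕ, Nat.Coprime (1 + k * c) m → ∑ j ∈ T, g j * v j ^ k = 0 := by
    intro k hk
    have h0 := hrel _ hk
    calc ∑ j ∈ T, g j * v j ^ k = ∑ j ∈ T, ζ ^ ((1 + k * c) * t j) := by
          refine Finset.sum_congr rfl fun j hj => ?_
          rw [← ht j hj, hvdef]
          show ζ ^ t j * (w ^ t j) ^ k = _
          rw [hwdef, ← pow_mul, ← pow_mul, ← pow_add]
          congr 1
          ring
      _ = 0 := h0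
  -- class sums
  set S : ℂ → ℂ := fun v₀ => ∑ j ∈ T.filter (fun j => v j = v₀), g j with hSdef
  have hswap : ∀ (K : ℕ) (v₀ : ℂ),
      ∑ k ∈ Finset.range K, (v₀⁻¹) ^ k * (∑ j ∈ T, g j * v j ^ k)
        = ∑ j ∈ T, g j * (∑ k ∈ Finset.range K, (v j * v₀⁻¹) ^ k) := by
    intro K v₀
    calc ∑ k ∈ Finset.range K, (v₀⁻¹) ^ k * (∑ j ∈ T, g j * v j ^ k)
        = ∑ k ∈ Finset.range K, ∑ j ∈ T, (v₀⁻¹) ^ k * (g j * v j ^ k) := by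
          exact Finset.sum_congr rfl fun k _ => Finset.mul_sum _ _ _
      _ = ∑ j ∈ T, ∑ k ∈ Finset.range K, (v₀⁻¹) ^ k * (g j * v j ^ k) := Finset.sum_comm
      _ = ∑ j ∈ T, g j * (∑ k ∈ Finset.range K, (v j * v₀⁻¹) ^ k) := by
          refine Finset.sum_congr rfl fun j _ => ?_
          rw [Finset.mul_sum]
          refine Finset.sum_congr rfl fun k _ => ?_
          rw [mul_pow]; ring
  have hgeomA : ∀ x : ℂ, x ^ p = 1 → x ≠ 1 → ∑ k ∈ Finset.range p, x ^ k = 0 := by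
    intro x hxp hx1
    rw [geom_sum_eq hx1, hxp, sub_self, zero_div]
  have hx0 : ∀ x : ℂ, x ^ p = 1 → x ≠ 0 := by
    intro x hxp h
    rw [h, zero_pow hp.pos.ne'] at hxp
    exact zero_ne_one hxp
  have hgeomB : ∀ x : ℂ, x ^ p = 1 → x ≠ 1 → ∑ k ∈ Finset.range (p - 1), x ^ k = -x⁻¹ := by
    intro x hxp hx1
    have hx0' : x ≠ 0 := hx0 x hxp
    have hxp1 : x ^ (p - 1) = x⁻¹ := by
      have h1 : x ^ (p - 1) * x = 1 := by
        rw [← pow_succ, Nat.sub_add_cancel hp.pos, hxp]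
      rw [inv_eq_one_div, eq_div_iff hx0']
      exact h1
    have hx1' : x - 1 ≠ 0 := sub_ne_zero.2 hx1
    rw [geom_sum_eq hx1, hxp1, div_eq_iff hx1']
    field_simp
    ring
  -- branch A : all class sums vanish
  have hSzeroA : 2 ≤ a → ∀ v₀ : ℂ, v₀ ^ p = 1 → S v₀ = 0 := by
    intro ha2 v₀ hv₀p
    have hv₀0 : v₀ ≠ 0 := hx0 v₀ hv₀p
    have hpc : p ∣ c := by
      have h1 : p ∣ p ^ (a - 1) := dvd_pow_self p (by omega)
      have h2 : p ^ (a - 1) ∣ m / p := by rw [hmpc]; exact Dvd.intro m' rfl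
      exact (h1.trans h2).trans (dvd_mul_right (m / p) r)
    have hcops : ∀ k : ℕ, Nat.Coprime (1 + k * c) m := by
      intro k
      refine hcopgen k ?_
      intro hdvd
      have : p ∣ 1 := by
        have h3 := Nat.dvd_sub hdvd (Dvd.dvd.mul_left hpc k)
        simpa using h3
      exact hp.one_lt.ne' (Nat.dvd_one.1 this)
    have h0 : ∑ j ∈ T, g j * (∑ k ∈ Finset.range p, (v j * v₀⁻¹) ^ k) = 0 := by
      rw [← hswap]
      rw [Finset.sum_congr rfl (fun k _ => by rw [hArel k (hcops k), mul_zero])]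
      exact Finset.sum_const_zero
    have h1 : ∑ j ∈ T, g j * (if v j = v₀ then (p : ℂ) else 0) = 0 := by
      have heq : ∀ j ∈ T, g j * (if v j = v₀ then (p : ℂ) else 0)
          = g j * (∑ k ∈ Finset.range p, (v j * v₀⁻¹) ^ k) := by
        intro j _
        congr 1
        by_cases hvv : v j = v₀
        · rw [if_pos hvv, hvv, mul_inv_cancel₀ hv₀0]
          simp
        · have hxp : (v j * v₀⁻¹) ^ p = 1 := by
            rw [mul_pow, hvp j, one_mul, inv_pow, hv₀p, inv_one]
          have hxx : v j * v₀⁻¹ ≠ 1 := by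
            rw [Ne, mul_inv_eq_one₀ hv₀0]; exact hvv
          rw [if_neg hvv, hgeomA _ hxp hxx]
      rw [Finset.sum_congr rfl heq]
      exact h0
    have h2 : (p : ℂ) * S v₀ = 0 := by
      simp only [hSdef]
      rw [Finset.sum_filter, Finset.mul_sum]
      refine Eq.trans ?_ h1
      refine Finset.sum_congr rfl fun j _ => ?_
      by_cases hvv : v j = v₀
      · rw [if_pos hvv, if_pos hvv]; ring
      · rw [if_neg hvv, if_neg hvv]; ring
    have hpne : (p : ℂ) ≠ 0 := Nat.cast_ne_zero.2 hp.pos.ne'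
    exact (mul_eq_zero.1 h2).resolve_left hpne
  -- branch B : all class sums vanish
  have hSzeroB : a = 1 → #T < p → ∀ v₀ : ℂ, v₀ ^ p = 1 → S v₀ = 0 := by
    intro ha1' hnp
    have hcm' : c = m' * r := by
      rw [hcdef, hmpc, ha1']
      simp
    have hcmodp : c % p = 1 % p := by
      have hr' := hr
      rw [ha1', pow_one] at hr'
      rw [hcm', hr', Nat.mod_eq_of_lt hp.one_lt]
    have h0 : ∀ k : ℕ, k ≤ p - 2 → ∑ j ∈ T, g j * v j ^ k = 0 := by
      intro k hk
      refine hArel k (hcopgen k ?_)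
      intro hdvd
      have hmod : (1 + k * c) % p = (1 + k) % p := by
        have h1 : (k * c) % p = (k * 1) % p := Nat.ModEq.mul_left k hcmodp
        calc (1 + k * c) % p = (1 + k * 1) % p := Nat.ModEq.add_left 1 h1
          _ = (1 + k) % p := by rw [mul_one]
      have hpk : p ∣ 1 + k := by
        have hz := (Nat.modEq_zero_iff_dvd).2 hdvd
        have h2 : (1 + k) % p = 0 % p := by rw [← hmod]; exact hz
        exact (Nat.modEq_zero_iff_dvd).1 h2
      have := Nat.le_of_dvd (by omega) hpk
      have hp2 : 2 ≤ p := hp.two_le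
      omega
    set Λ : ℂ := ∑ j ∈ T, g j * (v j)⁻¹ with hΛdef
    have hkey : ∀ v₀ : ℂ, v₀ ^ p = 1 → (p : ℂ) * S v₀ = v₀ * Λ := by
      intro v₀ hv₀p
      have hv₀0 : v₀ ≠ 0 := hx0 v₀ hv₀p
      have hz : ∑ j ∈ T, g j * (∑ k ∈ Finset.range (p - 1), (v j * v₀⁻¹) ^ k) = 0 := by
        rw [← hswap]
        rw [Finset.sum_congr rfl (fun k hk => by
          rw [h0 k (by have := Finset.mem_range.1 hk; omega), mul_zero])]
        exact Finset.sum_const_zero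
      have h1 : ∑ j ∈ T, g j * (if v j = v₀ then ((p : ℂ) - 1) else -((v j)⁻¹ * v₀)) = 0 := by
        have heq : ∀ j ∈ T, g j * (if v j = v₀ then ((p : ℂ) - 1) else -((v j)⁻¹ * v₀))
            = g j * (∑ k ∈ Finset.range (p - 1), (v j * v₀⁻¹) ^ k) := by
          intro j _
          congr 1
          by_cases hvv : v j = v₀
          · rw [if_pos hvv, hvv, mul_inv_cancel₀ hv₀0]
            simp [Finset.card_range, Nat.cast_sub hp.pos]
          · have hxp : (v j * v₀⁻¹) ^ p = 1 := by
              rw [mul_pow, hvp j, one_mul, inv_pow, hv₀p, inv_one]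
            have hxx : v j * v₀⁻¹ ≠ 1 := by
              rw [Ne, mul_inv_eq_one₀ hv₀0]; exact hvv
            rw [if_neg hvv, hgeomB _ hxp hxx, mul_inv, inv_inv]
        rw [Finset.sum_congr rfl heq]
        exact hz
      have h2 : ∑ j ∈ T, g j * (if v j = v₀ then ((p : ℂ) - 1) else -((v j)⁻¹ * v₀))
          = (p : ℂ) * S v₀ - v₀ * Λ := by
        simp only [hSdef, hΛdef]
        rw [Finset.sum_filter, Finset.mul_sum, Finset.mul_sum, ← Finset.sum_sub_distrib]
        refine Finset.sum_congr rfl fun j hj => ?_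
        by_cases hvv : v j = v₀
        · rw [if_pos hvv, if_pos hvv, hvv]
          field_simp
        · rw [if_neg hvv, if_neg hvv]
          ring
      rw [h2] at h1
      linear_combination h1
    have hξ : IsPrimitiveRoot (Complex.exp (2 * Real.pi * Complex.I / p)) p :=
      Complex.isPrimitiveRoot_exp p hp.pos.ne'
    have hcards : (Polynomial.nthRootsFinset p (1 : ℂ)).card = p := hξ.card_nthRootsFinset
    obtain ⟨v₀, hv₀mem, hv₀nim⟩ :
        ∃ v₀ ∈ Polynomial.nthRootsFinset p (1 : ℂ), v₀ ∉ T.image v := by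
      by_contra hcon
      push_neg at hcon
      have hsub : Polynomial.nthRootsFinset p (1 : ℂ) ⊆ T.image v := fun x hx => hcon x hx
      have hc1 := Finset.card_le_card hsub
      have hc2 := Finset.card_image_le (s := T) (f := v)
      omega
    have hv₀p : v₀ ^ p = 1 := (Polynomial.mem_nthRootsFinset hp.pos 1).1 hv₀mem
    have hfilt : T.filter (fun j => v j = v₀) = ∅ := by
      rw [Finset.filter_eq_empty_iff]
      intro j hj hvj
      exact hv₀nim (Finset.mem_image.2 ⟨j, hj, hvj⟩)
    have hSv₀ : S v₀ = 0 := by simp only [hSdef]; rw [hfilt]; exact Finset.sum_empty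
    have hΛ0 : Λ = 0 := by
      have hk := hkey v₀ hv₀p
      rw [hSv₀, mul_zero] at hk
      have hv₀0 : v₀ ≠ 0 := hx0 v₀ hv₀p
      rcases mul_eq_zero.1 hk.symm with h | h
      · exact absurd h hv₀0
      · exact h
    intro v₁ hv₁p
    have hk := hkey v₁ hv₁p
    rw [hΛ0, mul_zero] at hk
    have hpne : (p : ℂ) ≠ 0 := Nat.cast_ne_zero.2 hp.pos.ne'
    rcases mul_eq_zero.1 hk with h | h
    · exact absurd h hpne
    · exact h
  -- both branches give S 1 = 0
  have hS1 : S 1 = 0 := by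
    rcases hcase with ha2 | hnp
    · exact hSzeroA ha2 1 (one_pow p)
    · rcases Nat.lt_or_ge a 2 with hlt | hge
      · exact hSzeroB (by omega) hnp 1 (one_pow p)
      · exact hSzeroA hge 1 (one_pow p)
  -- the class of 1 is all of T
  have hvi₀ : v i₀ = 1 := by
    have hg1 : g i₀ = 1 := by rw [hgdef i₀ hi₀, div_self (hf0 i₀ hi₀)]
    have hζt : ζ ^ t i₀ = 1 := by rw [ht i₀ hi₀, hg1]
    have hmd : m ∣ t i₀ := (hζ.pow_eq_one_iff_dvd _).1 hζt
    show w ^ t i₀ = 1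
    rw [hw1]
    exact hpm.trans hmd
  have hC1 : T.filter (fun j => v j = 1) = T := by
    by_contra hne
    refine hmin _ (Finset.filter_subset _ _)
      ⟨i₀, Finset.mem_filter.2 ⟨hi₀, hvi₀⟩⟩ hne ?_
    have hfg : ∑ j ∈ T.filter (fun j => v j = 1), f j
        = (∑ j ∈ T.filter (fun j => v j = 1), g j) * f i₀ := by
      rw [Finset.sum_mul]
      refine Finset.sum_congr rfl fun j hj => ?_
      have hjT := (Finset.mem_filter.1 hj).1
      rw [hgdef j hjT, div_mul_cancel₀ _ (hf0 i₀ hi₀)]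
    rw [hfg]
    have : (∑ j ∈ T.filter (fun j => v j = 1), g j) = S 1 := rfl
    rw [this, hS1, zero_mul]
  have hpt : ∀ j ∈ T, p ∣ t j := by
    intro j hj
    have hjf : j ∈ T.filter (fun j => v j = 1) := hC1.symm ▸ hj
    have hv1' : w ^ t j = 1 := (Finset.mem_filter.1 hjf).2
    exact (hw1 _).1 hv1'
  have hPmp : ∀ j ∈ T, g j ^ (m / p) = 1 := by
    intro j hj
    obtain ⟨s, hs⟩ := hpt j hj
    rw [← ht j hj, ← pow_mul, hs]
    have hexp : p * s * (m / p) = m * s := by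
      conv_rhs => rw [← hmp]
      ring
    rw [hexp, pow_mul, hζ.pow_eq_one, one_pow]
  have hle := hleast (m / p) hmp0 hPmp
  have := Nat.div_lt_self hm1 hp.one_lt
  omega

def primor (n : ℕ) : ℕ := ∏ p ∈ Finset.filter Nat.Prime (Finset.range (n+1)), p

lemma primor_pos (n : ℕ) : 0 < primor n :=
  Finset.prod_pos (fun p hp => (Finset.mem_filter.1 hp).2.pos)

lemma primor_dvd_primor {m n : ℕ} (h : m ≤ n) : primor m ∣ primor n := by
  refine Finset.prod_dvd_prod_of_subset _ _ _ ?_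
  intro q hq
  simp only [Finset.mem_filter, Finset.mem_range] at hq ⊢
  exact ⟨by omega, hq.2⟩

lemma pow_eq_one_of_dvd {x : ℂ} {k K : ℕ} (h : x ^ k = 1) (hd : k ∣ K) : x ^ K = 1 := by
  obtain ⟨c, rfl⟩ := hd
  rw [pow_mul, h, one_pow]

lemma prime_dvd_primor {p n : ℕ} (hp : p.Prime) (hpn : p ≤ n) : p ∣ primor n :=
  Finset.dvd_prod_of_mem _ (by
    simp only [Finset.mem_filter, Finset.mem_range]
    exact ⟨by omega, hp⟩)

theorem mann {ι : Type*} [DecidableEq ι] (T : Finset ι) (f : ι → ℂ)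
    (hroot : ∀ i ∈ T, ∃ k : ℕ, 0 < k ∧ f i ^ k = 1)
    (hsum : ∑ i ∈ T, f i = 0)
    (hmin : ∀ T' ⊆ T, T'.Nonempty → T' ≠ T → ∑ i ∈ T', f i ≠ 0) :
    ∀ i ∈ T, ∀ i' ∈ T, (f i / f i') ^ primor T.card = 1 := by
  classical
  intro i hi i₀ hi₀
  have hf0 : ∀ j ∈ T, f j ≠ 0 := by
    intro j hj h
    obtain ⟨k, hk, hk1⟩ := hroot j hj
    rw [h, zero_pow hk.ne'] at hk1
    exact zero_ne_one hk1
  set g : ι → ℂ := fun j => f j / f i₀ with hgdef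
  have hgroot : ∀ j ∈ T, ∃ k : ℕ, 0 < k ∧ g j ^ k = 1 := by
    intro j hj
    obtain ⟨k1, hk1, h1⟩ := hroot j hj
    obtain ⟨k2, hk2, h2⟩ := hroot i₀ hi₀
    refine ⟨k1 * k2, Nat.mul_pos hk1 hk2, ?_⟩
    have hn : f j ^ (k1 * k2) = 1 := pow_eq_one_of_dvd h1 ⟨k2, rfl⟩
    have hdnm : f i₀ ^ (k1 * k2) = 1 := pow_eq_one_of_dvd h2 ⟨k1, mul_comm k1 k2⟩
    show (f j / f i₀) ^ (k1 * k2) = 1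
    rw [div_pow, hn, hdnm, div_one]
  have hexP : ∃ n : ℕ, 0 < n ∧ ∀ j ∈ T, g j ^ n = 1 := by
    set k' : ι → ℕ := fun j => if h : j ∈ T then (hgroot j h).choose else 1 with hk'def
    refine ⟨∏ j ∈ T, k' j, Finset.prod_pos (fun j hj => ?_), fun j hj => ?_⟩
    · simp only [hk'def, dif_pos hj]
      exact (hgroot j hj).choose_spec.1
    · have hd : k' j ∣ ∏ j ∈ T, k' j := Finset.dvd_prod_of_mem k' hj
      refine pow_eq_one_of_dvd ?_ hd
      simp only [hk'def, dif_pos hj]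
      exact (hgroot j hj).choose_spec.2
  haveI : DecidablePred (fun n : ℕ => 0 < n ∧ ∀ j ∈ T, g j ^ n = 1) := Classical.decPred _
  set m := Nat.find hexP with hmdef
  obtain ⟨hm1, hm2⟩ := Nat.find_spec hexP
  have hleast : ∀ m'' : ℕ, 0 < m'' → (∀ j ∈ T, g j ^ m'' = 1) → m ≤ m'' :=
    fun m'' h1 h2 => Nat.find_le ⟨h1, h2⟩
  have hkey : ∀ p : ℕ, p.Prime → p ∣ m → m.factorization p = 1 ∧ p ≤ T.card := by
    intro p hp hpm
    have ha1 : 1 ≤ m.factorization p := hp.factorization_pos_of_dvd hm1.ne' hpm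
    constructor
    · by_contra h
      exact mann_core T f g i₀ hi₀ hf0 (fun j _ => rfl) hsum hmin m hm1 hm2 hleast p hp hpm
        (Or.inl (by omega))
    · by_contra h
      exact mann_core T f g i₀ hi₀ hf0 (fun j _ => rfl) hsum hmin m hm1 hm2 hleast p hp hpm
        (Or.inr (by omega))
  have hdvd : m ∣ primor T.card := by
    rw [← Nat.factorization_le_iff_dvd hm1.ne' (primor_pos T.card).ne', Finsupp.le_def]
    intro p
    by_cases hp : p.Prime
    · by_cases hpm : p ∣ m
      · obtain ⟨h1, h2⟩ := hkey p hp hpm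
        rw [h1]
        have : p ∣ primor T.card := prime_dvd_primor hp h2
        exact hp.factorization_pos_of_dvd (primor_pos T.card).ne' this
      · rw [Nat.factorization_eq_zero_of_not_dvd hpm]
        exact Nat.zero_le _
    · rw [Nat.factorization_eq_zero_of_not_prime _ hp]
      exact Nat.zero_le _
  exact pow_eq_one_of_dvd (hm2 i hi) hdvd

lemma exists_min_partition {ι : Type*} [DecidableEq ι] (f : ι → ℂ) :
    ∀ T : Finset ι, ∑ i ∈ T, f i = 0 →
    ∃ P : Finset (Finset ι), (∀ S ∈ P, S ⊆ T) ∧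
      (∀ S₁ ∈ P, ∀ S₂ ∈ P, S₁ ≠ S₂ → Disjoint S₁ S₂) ∧
      (∀ i ∈ T, ∃ S ∈ P, i ∈ S) ∧
      (∀ S ∈ P, S.Nonempty ∧ (∑ i ∈ S, f i = 0) ∧
        ∀ S' ⊆ S, S'.Nonempty → S' ≠ S → ∑ i ∈ S', f i ≠ 0) := by
  intro T
  induction T using Finset.strongInduction with
  | _ T ih =>
    intro hT
    rcases T.eq_empty_or_nonempty with rfl | hne
    · exact ⟨∅, by simp, by simp, by simp, by simp⟩
    · have hmem : T ∈ T.powerset.filter (fun S => S.Nonempty ∧ ∑ i ∈ S, f i = 0) := by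
        simp only [Finset.mem_filter, Finset.mem_powerset]
        exact ⟨Finset.Subset.refl T, hne, hT⟩
      obtain ⟨S, hSmem, hSmin⟩ := Finset.exists_min_image
        (T.powerset.filter (fun S => S.Nonempty ∧ ∑ i ∈ S, f i = 0)) Finset.card ⟨T, hmem⟩
      simp only [Finset.mem_filter, Finset.mem_powerset] at hSmem
      obtain ⟨hST, hSne, hSsum⟩ := hSmem
      have hSminimal : ∀ S' ⊆ S, S'.Nonempty → S' ≠ S → ∑ i ∈ S', f i ≠ 0 := by
        intro S' hS'S hS'ne hS'neq hS'sum
        have hmem' : S' ∈ T.powerset.filter (fun S => S.Nonempty ∧ ∑ i ∈ S, f i = 0) := by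
          simp only [Finset.mem_filter, Finset.mem_powerset]
          exact ⟨hS'S.trans hST, hS'ne, hS'sum⟩
        have hlt : S'.card < S.card := Finset.card_lt_card ⟨hS'S, fun h => hS'neq
          (Finset.Subset.antisymm hS'S h)⟩
        exact absurd (hSmin S' hmem') (by omega)
      -- the remainder
      have hrem : ∑ i ∈ T \ S, f i = 0 := by
        have h1 := Finset.sum_sdiff hST (f := f)
        rw [hT, hSsum, add_zero] at h1
        exact h1
      have hTS : T \ S ⊂ T := by
        refine Finset.sdiff_ssubset ?_ ?_ <;> try exact hST
        exact hSne
      obtain ⟨P', hP1, hP2, hP3, hP4⟩ := ih (T \ S) hTS hrem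
      refine ⟨insert S P', ?_, ?_, ?_, ?_⟩
      · intro S' hS'
        rcases Finset.mem_insert.1 hS' with rfl | h
        · exact hST
        · exact (hP1 S' h).trans (Finset.sdiff_subset)
      · intro S₁ h₁ S₂ h₂ hne12
        rcases Finset.mem_insert.1 h₁ with rfl | h₁' <;> rcases Finset.mem_insert.1 h₂ with rfl | h₂'
        · exact absurd rfl hne12
        · rw [Finset.disjoint_left]
          intro x hx hx2
          exact ((Finset.mem_sdiff.1 ((hP1 _ h₂') hx2)).2) hx
        · rw [Finset.disjoint_right]
          intro x hx hx2
          exact ((Finset.mem_sdiff.1 ((hP1 _ h₁') hx2)).2) hx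
        · exact hP2 _ h₁' _ h₂' hne12
      · intro i hi
        by_cases h : i ∈ S
        · exact ⟨S, Finset.mem_insert_self _ _, h⟩
        · obtain ⟨S', hS', hiS'⟩ := hP3 i (Finset.mem_sdiff.2 ⟨hi, h⟩)
          exact ⟨S', Finset.mem_insert_of_mem hS', hiS'⟩
      · intro S' hS'
        rcases Finset.mem_insert.1 hS' with rfl | h
        · exact ⟨hSne, hSsum, hSminimal⟩
        · exact hP4 S' h

/-- the standard primitive `N`-th root of unity in `ℂ`. -/
def zet (N : ℕ) : ℂ := Complex.exp (2 * Real.pi * Complex.I / N)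

lemma zet_zpow (N : ℕ) (hN : N ≠ 0) (e : ℤ) :
    zet N ^ e = Complex.exp (((2 * Real.pi * (e : ℝ) / N : ℝ) : ℂ) * Complex.I) := by
  rw [zet, ← Complex.exp_int_mul]
  congr 1
  have hN' : (N : ℂ) ≠ 0 := Nat.cast_ne_zero.2 hN
  push_cast
  field_simp

lemma zet_re (N : ℕ) (hN : N ≠ 0) (e : ℤ) :
    (zet N ^ e).re = Real.cos (2 * Real.pi * (e : ℝ) / N) := by
  rw [zet_zpow N hN, Complex.exp_ofReal_mul_I_re]

lemma zet_re_nat (N : ℕ) (hN : N ≠ 0) (s : Bool) (k : ℕ) :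
    (zet N ^ ((if s then (1:ℤ) else -1) * (k : ℤ))).re = Real.cos (2 * Real.pi * (k : ℝ) / N) := by
  rw [zet_re N hN]
  cases s
  · have h0 : ((if false then (1:ℤ) else -1) * (k : ℤ)) = -(k : ℤ) := by simp
    rw [h0]
    have h1 : (2 : ℝ) * Real.pi * ((-(k:ℤ) : ℤ) : ℝ) / N = -(2 * Real.pi * (k : ℝ) / N) := by
      push_cast
      ring
    rw [h1, Real.cos_neg]
  · have h0 : ((if true then (1:ℤ) else -1) * (k : ℤ)) = (k : ℤ) := by simp
    rw [h0]
    norm_num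

lemma zet_pair_cos (N : ℕ) (hN : N ≠ 0) (k : ℕ) :
    zet N ^ ((k : ℤ)) + zet N ^ (-(k : ℤ))
      = ((2 * Real.cos (2 * Real.pi * (k : ℝ) / N) : ℝ) : ℂ) := by
  rw [zet_zpow N hN, zet_zpow N hN]
  have h1 : ((2 * Real.pi * ((-(k:ℤ) : ℤ) : ℝ) / N : ℝ) : ℂ)
      = -((2 * Real.pi * ((k:ℤ) : ℝ) / N : ℝ) : ℂ) := by
    push_cast
    ring
  rw [h1, neg_mul, Complex.exp_mul_I, ← neg_mul, Complex.exp_mul_I]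
  rw [Complex.cos_neg, Complex.sin_neg]
  have h2 : ((2 * Real.pi * ((k:ℤ) : ℝ) / N : ℝ) : ℂ) = ((2 * Real.pi * (k : ℝ) / N : ℝ) : ℂ) := by
    push_cast
    ring
  rw [h2, ← Complex.ofReal_cos]
  push_cast
  ring

lemma zet_ne_zero (N : ℕ) : zet N ≠ 0 := Complex.exp_ne_zero _

lemma zet_zpow_rootofunity (N : ℕ) (hN : N ≠ 0) (e : ℤ) : (zet N ^ e) ^ (2 * N) = 1 := by
  have hζ : IsPrimitiveRoot (zet N) N := Complex.isPrimitiveRoot_exp N hN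
  have h1 : (zet N ^ e) ^ (2 * N : ℕ) = (zet N ^ ((N : ℕ) : ℤ)) ^ (2 * e) := by
    rw [← zpow_natCast (zet N ^ e), ← zpow_mul, ← zpow_mul]
    congr 1
    push_cast
    ring
  rw [h1, zpow_natCast, hζ.pow_eq_one, one_zpow]

/-- bound on orders of ratios in vanishing subsums -/
def MM (d : ℕ) : ℕ := primor (4 * d)

lemma MM_pos (d : ℕ) : 0 < MM d := primor_pos _

/-- the finite set of complex numbers in which all `zet N ^ (a j)` must lie,
for `a` a solution with extreme eigenvalue, given a base solution `b`. -/
def PinSet (N d : ℕ) (b : Fin d → Fin N) : Finset ℂ :=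
  (((Finset.univ : Finset (Fin d × Bool)) ×ˢ Polynomial.nthRootsFinset (MM d) (1 : ℂ)).image
    (fun q => (-1) * zet N ^ ((if q.1.2 then (1:ℤ) else -1) * ((b q.1.1 : ℕ) : ℤ)) * q.2))
  ∪ Polynomial.nthRootsFinset (2 * MM d ^ 2) (1 : ℂ)

lemma PinSet_card (N d : ℕ) (b : Fin d → Fin N) :
    (PinSet N d b).card ≤ 2 * d * MM d + 2 * MM d ^ 2 := by
  refine (Finset.card_union_le _ _).trans ?_
  have h2 : (Polynomial.nthRootsFinset (MM d) (1 : ℂ)).card = MM d :=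
    (Complex.isPrimitiveRoot_exp (MM d) (MM_pos d).ne').card_nthRootsFinset
  have h3 : (Polynomial.nthRootsFinset (2 * MM d ^ 2) (1 : ℂ)).card = 2 * MM d ^ 2 :=
    (Complex.isPrimitiveRoot_exp (2 * MM d ^ 2)
      (by have := MM_pos d; positivity)).card_nthRootsFinset
  have h1 : (((Finset.univ : Finset (Fin d × Bool)) ×ˢ
      Polynomial.nthRootsFinset (MM d) (1 : ℂ)).image
      (fun q => (-1) * zet N ^ ((if q.1.2 then (1:ℤ) else -1) * ((b q.1.1 : ℕ) : ℤ)) * q.2)).card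
      ≤ 2 * d * MM d := by
    refine Finset.card_image_le.trans ?_
    rw [Finset.card_product, h2]
    have h4 : (Finset.univ : Finset (Fin d × Bool)).card = d * 2 := by simp
    rw [h4]
    have : d * 2 = 2 * d := by ring
    rw [this]
  rw [h3]
  omega

lemma mem_rootsFinset_inv {n : ℕ} (hn : 0 < n) {z : ℂ}
    (h : z ∈ Polynomial.nthRootsFinset n (1 : ℂ)) : z⁻¹ ∈ Polynomial.nthRootsFinset n (1 : ℂ) := by
  rw [Polynomial.mem_nthRootsFinset hn 1] at h ⊢
  rw [inv_pow, h, inv_one]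

lemma pinned {N d : ℕ} (hN : 3 ≤ N) {μ : ℝ}
    (hedge : 2 * ((d : ℝ) - 2) < |μ|)
    (a b : Fin d → Fin N)
    (ha : (∑ j, 2 * Real.cos (2 * Real.pi * (a j : ℝ) / N)) = μ)
    (hb : (∑ j, 2 * Real.cos (2 * Real.pi * (b j : ℝ) / N)) = μ)
    (j : Fin d) : zet N ^ ((a j : ℕ)) ∈ PinSet N d b := by
  classical
  have hN0 : N ≠ 0 := by omega
  have hζ : IsPrimitiveRoot (zet N) N := Complex.isPrimitiveRoot_exp N hN0
  have hM0 : 0 < MM d := MM_pos d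
  set M := MM d with hMdef
  set expo : Bool × Fin d × Bool → ℤ := fun x =>
    (if x.2.2 then (1:ℤ) else -1) *
      (if x.1 then ((a x.2.1 : ℕ) : ℤ) else ((b x.2.1 : ℕ) : ℤ)) with hexpo
  set F : Bool × Fin d × Bool → ℂ :=
    fun x => (if x.1 then 1 else -1) * zet N ^ expo x with hF
  have hF0 : ∀ i, F i ≠ 0 := by
    intro i
    simp only [hF]
    refine mul_ne_zero ?_ (zpow_ne_zero _ (zet_ne_zero N))
    by_cases h : i.1 <;> simp [h]
  have hFroot : ∀ i, F i ^ (2 * N) = 1 := by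
    intro i
    simp only [hF]
    rw [mul_pow, zet_zpow_rootofunity N hN0]
    have h1 : ((if i.1 then (1:ℂ) else -1)) ^ (2 * N) = 1 := by
      by_cases h : i.1 <;> simp [h, pow_mul]
    rw [h1, one_mul]
  -- the total sum vanishes
  have hside : ∀ c : Fin d → Fin N,
      (∑ y : Fin d × Bool, zet N ^ ((if y.2 then (1:ℤ) else -1) * ((c y.1 : ℕ) : ℤ)))
        = ((∑ j, 2 * Real.cos (2 * Real.pi * (c j : ℝ) / N) : ℝ) : ℂ) := by
    intro c
    rw [Fintype.sum_prod_type]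
    push_cast
    refine Finset.sum_congr rfl fun i _ => ?_
    rw [Fintype.sum_bool]
    have h1 := zet_pair_cos N hN0 (c i : ℕ)
    push_cast at h1
    simpa using h1
  have hsum : ∑ i : Bool × Fin d × Bool, F i = 0 := by
    rw [Fintype.sum_prod_type, Fintype.sum_bool]
    have h1 : ∑ y : Fin d × Bool, F (true, y) = ((μ : ℝ) : ℂ) := by
      have h := hside a
      rw [ha] at h
      rw [← h]
      refine Finset.sum_congr rfl fun y _ => ?_
      simp only [hF, hexpo]
      norm_num
    have h2 : ∑ y : Fin d × Bool, F (false, y) = -((μ : ℝ) : ℂ) := by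
      have h := hside b
      rw [hb] at h
      rw [← h, ← Finset.sum_neg_distrib]
      refine Finset.sum_congr rfl fun y _ => ?_
      simp only [hF, hexpo]
      rcases y with ⟨c', e⟩
      cases e <;> simp
    rw [h1, h2, add_neg_cancel]
  obtain ⟨P, hP1, hP2, hP3, hP4⟩ := exists_min_partition F Finset.univ hsum
  have hcard4d : ∀ S : Finset (Bool × Fin d × Bool), S.card ≤ 4 * d := by
    intro S
    have h1 : S.card ≤ Fintype.card (Bool × Fin d × Bool) := Finset.card_le_univ S
    simp only [Fintype.card_prod, Fintype.card_bool, Fintype.card_fin] at h1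
    omega
  have hratio : ∀ S ∈ P, ∀ i ∈ S, ∀ i' ∈ S, (F i / F i') ^ M = 1 := by
    intro S hS i hi i' hi'
    obtain ⟨hSne, hSsum, hSmin⟩ := hP4 S hS
    have hm := mann S F (fun i _ => ⟨2 * N, by omega, hFroot i⟩) hSsum hSmin i hi i' hi'
    exact pow_eq_one_of_dvd hm (primor_dvd_primor (hcard4d S))
  -- pinning via a mixed part
  have hmixed : ∀ S ∈ P, ∀ i ∈ S, (∃ i' ∈ S, i'.1 = false) → F i ∈ PinSet N d b := by
    intro S hS i hi h
    obtain ⟨i', hi', hfalse⟩ := h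
    refine Finset.mem_union_left _ ?_
    rw [Finset.mem_image]
    refine ⟨((i'.2.1, i'.2.2), F i / F i'), ?_, ?_⟩
    · rw [Finset.mem_product]
      exact ⟨Finset.mem_univ _,
        (Polynomial.mem_nthRootsFinset hM0 1).2 (hratio S hS i hi i' hi')⟩
    · have hFi' : F i'
          = (-1) * zet N ^ ((if i'.2.2 then (1:ℤ) else -1) * ((b i'.2.1 : ℕ) : ℤ)) := by
        simp only [hF, hexpo, hfalse]
        norm_num
      show (-1) * zet N ^ ((if i'.2.2 then (1:ℤ) else -1) * ((b i'.2.1 : ℕ) : ℤ))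
          * (F i / F i') = F i
      rw [← hFi', mul_comm, div_mul_cancel₀ _ (hF0 i')]
  -- PinSet is closed under inverses
  have hPin_inv : ∀ z : ℂ, z ∈ PinSet N d b → z⁻¹ ∈ PinSet N d b := by
    intro z hz
    rcases Finset.mem_union.1 hz with hz | hz
    · refine Finset.mem_union_left _ ?_
      rw [Finset.mem_image] at hz ⊢
      obtain ⟨q, hq, rfl⟩ := hz
      rw [Finset.mem_product] at hq
      refine ⟨((q.1.1, !q.1.2), (q.2)⁻¹), ?_, ?_⟩
      · rw [Finset.mem_product]
        exact ⟨Finset.mem_univ _, mem_rootsFinset_inv hM0 hq.2⟩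
      · show (-1) * zet N ^ ((if !q.1.2 then (1:ℤ) else -1) * ((b q.1.1 : ℕ) : ℤ)) * (q.2)⁻¹
            = ((-1) * zet N ^ ((if q.1.2 then (1:ℤ) else -1) * ((b q.1.1 : ℕ) : ℤ)) * q.2)⁻¹
        have he : (if !q.1.2 then (1:ℤ) else -1) * ((b q.1.1 : ℕ) : ℤ)
            = -((if q.1.2 then (1:ℤ) else -1) * ((b q.1.1 : ℕ) : ℤ)) := by
          cases hqq : q.1.2 <;> simp
        rw [he, zpow_neg, mul_inv, mul_inv]
        have hneg : ((-1 : ℂ))⁻¹ = -1 := by norm_num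
        rw [hneg]
    · exact Finset.mem_union_right _
        (mem_rootsFinset_inv (by positivity) hz)
  -- pinning via a paired part
  have hpaired : ∀ S ∈ P, (∃ i ∈ S, ∃ i' ∈ S, i ≠ i' ∧ F i * F i' = 1) →
      ∀ i'' ∈ S, F i'' ∈ PinSet N d b := by
    intro S hS h i'' hi''
    obtain ⟨i, hi, i', hi', hne, hprod⟩ := h
    refine Finset.mem_union_right _ ?_
    rw [Polynomial.mem_nthRootsFinset (by positivity) 1]
    have h1 : F i' = (F i)⁻¹ := eq_inv_of_mul_eq_one_right hprod
    have h2 : (F i) ^ (2 * M) = 1 := by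
      have h3 : F i / F i' = (F i) ^ 2 := by rw [h1, div_eq_mul_inv, inv_inv, sq]
      have h4 := hratio S hS i hi i' hi'
      rw [h3, ← pow_mul] at h4
      exact h4
    have h5 := hratio S hS i'' hi'' i hi
    have h6 : F i'' = (F i'' / F i) * F i := (div_mul_cancel₀ _ (hF0 i)).symm
    rw [h6, mul_pow]
    rw [show 2 * M ^ 2 = M * (2 * M) by ring, pow_mul, h5, one_pow, one_mul]
    rw [show M * (2 * M) = (2 * M) * M by ring, pow_mul, h2, one_pow]
  -- suppose not pinned
  by_contra hnot
  set i₁ : Bool × Fin d × Bool := (true, j, true) with hi₁def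
  set i₂ : Bool × Fin d × Bool := (true, j, false) with hi₂def
  have hFi₁ : F i₁ = zet N ^ ((a j : ℕ)) := by
    simp only [hF, hexpo, hi₁def]
    norm_num
  have hFi₂ : F i₂ = (zet N ^ ((a j : ℕ)))⁻¹ := by
    simp only [hF, hexpo, hi₂def]
    norm_num
  obtain ⟨S₁, hS₁P, hiS₁⟩ := hP3 i₁ (Finset.mem_univ _)
  obtain ⟨S₂, hS₂P, hiS₂⟩ := hP3 i₂ (Finset.mem_univ _)
  have hS₁pure : ∀ i ∈ S₁, i.1 = true := by
    by_contra h
    push_neg at h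
    obtain ⟨i', hi', hfalse⟩ := h
    have hmem := hmixed S₁ hS₁P i₁ hiS₁ ⟨i', hi', by simpa using hfalse⟩
    rw [hFi₁] at hmem
    exact hnot hmem
  have hS₂pure : ∀ i ∈ S₂, i.1 = true := by
    by_contra h
    push_neg at h
    obtain ⟨i', hi', hfalse⟩ := h
    have hmem := hmixed S₂ hS₂P i₂ hiS₂ ⟨i', hi', by simpa using hfalse⟩
    rw [hFi₂] at hmem
    have hmem2 := hPin_inv _ hmem
    rw [inv_inv] at hmem2
    exact hnot hmem2
  have hS₁unp : ¬ (∃ i ∈ S₁, ∃ i' ∈ S₁, i ≠ i' ∧ F i * F i' = 1) := by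
    intro hex
    have hmem := hpaired S₁ hS₁P hex i₁ hiS₁
    rw [hFi₁] at hmem
    exact hnot hmem
  have hS₂unp : ¬ (∃ i ∈ S₂, ∃ i' ∈ S₂, i ≠ i' ∧ F i * F i' = 1) := by
    intro hex
    have hmem := hpaired S₂ hS₂P hex i₂ hiS₂
    rw [hFi₂] at hmem
    have hmem2 := hPin_inv _ hmem
    rw [inv_inv] at hmem2
    exact hnot hmem2
  have hS₁S₂ : S₁ ≠ S₂ := by
    intro h
    subst h
    refine hS₁unp ⟨i₁, hiS₁, i₂, hiS₂, ?_, ?_⟩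
    · simp [hi₁def, hi₂def]
    · rw [hFi₁, hFi₂, mul_inv_cancel₀ (pow_ne_zero _ (zet_ne_zero N))]
  -- the pure unpaired parts
  set Q := P.filter (fun S => (∀ i ∈ S, i.1 = true) ∧
      ¬ (∃ i ∈ S, ∃ i' ∈ S, i ≠ i' ∧ F i * F i' = 1)) with hQdef
  have hS₁Q : S₁ ∈ Q := Finset.mem_filter.2 ⟨hS₁P, hS₁pure, hS₁unp⟩
  have hS₂Q : S₂ ∈ Q := Finset.mem_filter.2 ⟨hS₂P, hS₂pure, hS₂unp⟩
  set W := Q.biUnion id with hWdef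
  have hdisjQ : (↑Q : Set (Finset (Bool × Fin d × Bool))).PairwiseDisjoint id :=
    fun S hS S' hS' hne =>
      hP2 S (Finset.mem_filter.1 (Finset.mem_coe.1 hS)).1 S'
        (Finset.mem_filter.1 (Finset.mem_coe.1 hS')).1 hne
  have hWre : ∑ i ∈ W, (F i).re = 0 := by
    rw [hWdef, Finset.sum_biUnion hdisjQ]
    refine Finset.sum_eq_zero fun S hS => ?_
    obtain ⟨_, hSsum, _⟩ := hP4 S (Finset.mem_filter.1 hS).1
    rw [id, ← Complex.re_sum, hSsum]
    rfl
  have hWpure : ∀ i ∈ W, i.1 = true := by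
    intro i hi
    obtain ⟨S, hSQ, hiS⟩ := Finset.mem_biUnion.1 hi
    exact ((Finset.mem_filter.1 hSQ).2.1) i hiS
  have hWre2 : ∀ i ∈ W, (F i).re = Real.cos (2 * Real.pi * ((a i.2.1 : ℕ) : ℝ) / N) := by
    intro i hi
    have h1 := hWpure i hi
    simp only [hF, hexpo, h1]
    simp only [if_true, ite_true, one_mul]
    exact zet_re_nat N hN0 i.2.2 (a i.2.1 : ℕ)
  set n : Fin d → ℕ := fun c => (W.filter (fun i => i.2.1 = c)).card with hndef
  have hfib : ∑ c : Fin d, ∑ i ∈ W.filter (fun i => i.2.1 = c), (F i).re = 0 := by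
    rw [Finset.sum_fiberwise_of_maps_to (fun i _ => Finset.mem_univ _)]
    exact hWre
  have hfib2 : ∀ c : Fin d, ∑ i ∈ W.filter (fun i => i.2.1 = c), (F i).re
      = (n c : ℝ) * Real.cos (2 * Real.pi * ((a c : ℕ) : ℝ) / N) := by
    intro c
    have heq : ∀ i ∈ W.filter (fun i => i.2.1 = c),
        (F i).re = Real.cos (2 * Real.pi * ((a c : ℕ) : ℝ) / N) := by
      intro i hi
      obtain ⟨hiW, hic⟩ := Finset.mem_filter.1 hi
      rw [hWre2 i hiW, hic]
    rw [Finset.sum_congr rfl heq, Finset.sum_const, nsmul_eq_mul]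
  have hzero : ∑ c : Fin d, (n c : ℝ) * Real.cos (2 * Real.pi * ((a c : ℕ) : ℝ) / N) = 0 := by
    rw [← hfib]
    exact (Finset.sum_congr rfl fun c _ => (hfib2 c)).symm
  have hn2 : ∀ c, n c ≤ 2 := by
    intro c
    show (W.filter (fun i => i.2.1 = c)).card ≤ 2
    have hsub : W.filter (fun i => i.2.1 = c)
        ⊆ ({(true, c, true), (true, c, false)} : Finset (Bool × Fin d × Bool)) := by
      intro i hi
      obtain ⟨hiW, hic⟩ := Finset.mem_filter.1 hi
      have h1 := hWpure i hiW
      rcases i with ⟨s, c', e⟩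
      simp only at h1 hic
      subst h1
      subst hic
      rcases e with _ | _ <;> simp
    have h2 := Finset.card_le_card hsub
    have h3 : ({(true, c, true), (true, c, false)} : Finset (Bool × Fin d × Bool)).card ≤ 2 := by
      refine le_trans (Finset.card_insert_le _ _) ?_
      simp
    omega
  have hncard : ∑ c : Fin d, n c = W.card :=
    (Finset.card_eq_sum_card_fiberwise (fun i _ => Finset.mem_univ _)).symm
  have hμeq : μ = ∑ c : Fin d,
      ((2:ℝ) - n c) * Real.cos (2 * Real.pi * ((a c : ℕ) : ℝ) / N) := by
    have h1 : ∑ c : Fin d, ((2:ℝ) - n c) * Real.cos (2 * Real.pi * ((a c : ℕ) : ℝ) / N)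
        = (∑ c : Fin d, 2 * Real.cos (2 * Real.pi * ((a c : ℕ) : ℝ) / N))
          - ∑ c : Fin d, (n c : ℝ) * Real.cos (2 * Real.pi * ((a c : ℕ) : ℝ) / N) := by
      rw [← Finset.sum_sub_distrib]
      refine Finset.sum_congr rfl fun c _ => ?_
      ring
    rw [h1, hzero, sub_zero, ha]
  have habs : |μ| ≤ 2 * d - W.card := by
    rw [hμeq]
    calc |∑ c : Fin d, ((2:ℝ) - n c) * Real.cos (2 * Real.pi * ((a c : ℕ) : ℝ) / N)|
        ≤ ∑ c : Fin d, |((2:ℝ) - n c) * Real.cos (2 * Real.pi * ((a c : ℕ) : ℝ) / N)| :=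
          Finset.abs_sum_le_sum_abs _ _
      _ ≤ ∑ c : Fin d, ((2:ℝ) - n c) := by
          refine Finset.sum_le_sum fun c _ => ?_
          rw [abs_mul]
          have hle : (n c : ℝ) ≤ 2 := by exact_mod_cast hn2 c
          have h1 : |(2:ℝ) - n c| = 2 - n c := abs_of_nonneg (by linarith)
          rw [h1]
          calc ((2:ℝ) - n c) * |Real.cos (2 * Real.pi * ((a c : ℕ) : ℝ) / N)|
              ≤ ((2:ℝ) - n c) * 1 := by
                refine mul_le_mul_of_nonneg_left (Real.abs_cos_le_one _) (by linarith)
            _ = (2:ℝ) - n c := mul_one _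
      _ = 2 * d - W.card := by
          rw [Finset.sum_sub_distrib]
          rw [Finset.sum_const, Finset.card_univ, Fintype.card_fin, nsmul_eq_mul]
          have h2 : ∑ c : Fin d, ((n c : ℝ)) = (W.card : ℝ) := by
            rw [← hncard]
            push_cast
            rfl
          rw [h2]
          ring
  have hW3 : W.card ≤ 3 := by
    by_contra h
    push_neg at h
    have h4 : (4:ℝ) ≤ (W.card : ℝ) := by exact_mod_cast h
    have hd' : (0:ℝ) ≤ (d:ℝ) := Nat.cast_nonneg d
    linarith [hedge, habs]
  have hsub : S₁ ∪ S₂ ⊆ W := by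
    intro i hi
    rcases Finset.mem_union.1 hi with h | h
    · exact Finset.mem_biUnion.2 ⟨S₁, hS₁Q, h⟩
    · exact Finset.mem_biUnion.2 ⟨S₂, hS₂Q, h⟩
  have hcard2 : ∀ S ∈ P, 2 ≤ S.card := by
    intro S hS
    obtain ⟨hSne, hSsum, hSmin⟩ := hP4 S hS
    obtain ⟨i, hi⟩ := hSne
    by_contra h
    push_neg at h
    have h1 : S.card = 1 := by
      have h2 := Finset.card_pos.2 ⟨i, hi⟩
      omega
    obtain ⟨x, hx⟩ := Finset.card_eq_one.1 h1
    rw [hx, Finset.sum_singleton] at hSsum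
    exact hF0 x hSsum
  have hdisj : Disjoint S₁ S₂ := hP2 S₁ hS₁P S₂ hS₂P hS₁S₂
  have hc4 : 4 ≤ (S₁ ∪ S₂).card := by
    rw [Finset.card_union_of_disjoint hdisj]
    have h1 := hcard2 S₁ hS₁P
    have h2 := hcard2 S₂ hS₂P
    omega
  have := Finset.card_le_card hsub
  omega

end TorusAux

end

theorem mult_bounded_of_extreme_eigenvalue (d : ℕ) (hd : 2 ≤ d) :
    ∃ C : ℕ, 0 < C ∧ ∀ N : ℕ, 3 ≤ N → ∀ μ : ℝ, 1 ≤ torusMult N d μ →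
      (2 * ((d : ℝ) - 2) < μ ∨ μ < -(2 * ((d : ℝ) - 2))) →
      torusMult N d μ ≤ C := by
  classical
  refine ⟨(2 * d * TorusAux.MM d + 2 * TorusAux.MM d ^ 2) ^ d, ?_, ?_⟩
  · have h1 := TorusAux.MM_pos d
    positivity
  intro N hN μ hmult hedge
  have hne : Nonempty {k : Fin d → Fin N //
      (∑ j, 2 * Real.cos (2 * Real.pi * (k j : ℝ) / N)) = μ} := by
    by_contra h
    rw [not_nonempty_iff] at h
    have h0 : torusMult N d μ = 0 := by
      rw [torusMult]
      exact Nat.card_of_isEmpty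
    omega
  obtain ⟨b, hb⟩ := hne
  have hedge' : 2 * ((d : ℝ) - 2) < |μ| := by
    rcases hedge with h | h
    · exact h.trans_le (le_abs_self μ)
    · calc 2 * ((d : ℝ) - 2) < -μ := by linarith
        _ ≤ |μ| := neg_le_abs μ
  set Pin := TorusAux.PinSet N d b with hPindef
  have hinj : Function.Injective (fun k : {k : Fin d → Fin N //
      (∑ j, 2 * Real.cos (2 * Real.pi * (k j : ℝ) / N)) = μ} =>
      (fun j => (⟨TorusAux.zet N ^ ((k.1 j : ℕ)),
        TorusAux.pinned hN hedge' k.1 b k.2 hb j⟩ : {x // x ∈ Pin}))) := by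
    intro k k' h
    have hζ : IsPrimitiveRoot (TorusAux.zet N) N :=
      Complex.isPrimitiveRoot_exp N (by omega)
    apply Subtype.ext
    funext j
    have h1 := congrFun h j
    have h2 : TorusAux.zet N ^ ((k.1 j : ℕ)) = TorusAux.zet N ^ ((k'.1 j : ℕ)) := by
      simpa [Subtype.ext_iff] using h1
    have h3 := hζ.pow_inj (k.1 j).isLt (k'.1 j).isLt h2
    exact Fin.ext h3
  have hcard := Nat.card_le_card_of_injective _ hinj
  have h4 : torusMult N d μ ≤ Nat.card (Fin d → {x // x ∈ Pin}) := hcard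
  refine h4.trans ?_
  have h5 : Nat.card (Fin d → {x // x ∈ Pin}) = Pin.card ^ d := by
    rw [Nat.card_eq_fintype_card, Fintype.card_fun]
    simp
  rw [h5]
  exact Nat.pow_le_pow_left (TorusAux.PinSet_card N d b) d
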